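/- Let m be a positive integer, let p : ZMod m → ℝ satisfy p(x) ≠ 0 for all x, and let k : ZMod m → ZMod m → ℝ be any base kernel. Define the difference score s_p(x) = (p(x) − p(x−1)) / p(x) and the Stein kernel k_p(x, x') = s_p(x) k(x,x') s_p(x') − s_p(x) (k(x,x') − k(x, x'+1)) − (k(x,x') − k(x+1, x')) s_p(x') + (k(x,x') − k(x, x'+1) − k(x+1, x') + k(x+1, x'+1)). Then the kernel mean embedding of k_p under p vanishes: for every x' ∈ ZMod m, ∑_{x ∈ ZMod m} p(x) k_p(x, x') = 0. -/
import Mathlib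


/-- Zero-mean-embedding property of the discrete Stein kernel on the cyclic domain
`ZMod m`: for any base kernel `k` and everywhere-nonzero mass function `p`, the Stein
kernel `k_p` built from the difference score `s_p(x) = (p(x) − p(x−1))/p(x)` satisfies
`∑_x p(x) k_p(x, x') = 0` for every `x'`. -/
theorem stmt19 (m : ℕ) [NeZero m] (p : ZMod m → ℝ) (hp : ∀ x, p x ≠ 0)
    (k : ZMod m → ZMod m → ℝ)
    (s : ZMod m → ℝ) (hs : ∀ x, s x = (p x - p (x - 1)) / p x)
    (kp : ZMod m → ZMod m → ℝ)
    (hkp : ∀ x x', kp x x' =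
      s x * k x x' * s x'
        - s x * (k x x' - k x (x' + 1))
        - (k x x' - k (x + 1) x') * s x'
        + (k x x' - k x (x' + 1) - k (x + 1) x' + k (x + 1) (x' + 1))) :
    ∀ x' : ZMod m, ∑ x : ZMod m, p x * kp x x' = 0 := by
  intro x'
  -- auxiliary function g
  have key : ∀ x : ZMod m, p x * kp x x' =
      (p x * (k x x' * s x' - (k x x' - k x (x' + 1)))
        - p (x - 1) * (k x x' * s x' - (k x x' - k x (x' + 1))))
      - (p x * (k x x' * s x' - (k x x' - k x (x' + 1)))
        - p x * (k (x + 1) x' * s x' - (k (x + 1) x' - k (x + 1) (x' + 1)))) := by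
    intro x
    have hps : p x * s x = p x - p (x - 1) := by
      rw [hs]; field_simp [hp x]
    have hpxm : p (x - 1) = p x - p x * s x := by rw [hps]; ring
    rw [hkp, hpxm]; ring
  simp only [key]
  rw [Finset.sum_sub_distrib, Finset.sum_sub_distrib, Finset.sum_sub_distrib]
  have hshift : ∑ x : ZMod m, p (x - 1) * (k x x' * s x' - (k x x' - k x (x' + 1)))
      = ∑ x : ZMod m, p x * (k (x + 1) x' * s x' - (k (x + 1) x' - k (x + 1) (x' + 1))) := by
    apply Fintype.sum_equiv (Equiv.subRight (1 : ZMod m))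
    intro x
    simp [Equiv.subRight_apply, sub_add_cancel]
  rw [hshift]; ring
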